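/- Let N be a finite group and let ω : N × N × N → ℂˣ be a 3-cocycle, i.e., ω(b,c,d)·ω(a,bc,d)·ω(a,b,c) = ω(ab,c,d)·ω(a,b,cd) for all a,b,c,d ∈ N. Then for every central element z ∈ Z(N), the function c_z(a,b) := ω(z,a,b)·ω(a,b,z)·ω(a,z,b)⁻¹ is a 2-cocycle of N with values in ℂˣ (with trivial action), i.e., c_z(a,b)·c_z(ab,c) = c_z(b,c)·c_z(a,bc) for all a,b,c ∈ N. -/

import Mathlib

/-- For a 3-cocycle `ω` on a finite group `N` with values in `ℂˣ` and a central element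
`z ∈ Z(N)`, the function `c_z(a,b) = ω(z,a,b)·ω(a,b,z)·ω(a,z,b)⁻¹` is a 2-cocycle. -/
theorem stmt19 {N : Type*} [Group N] [Fintype N] (ω : N → N → N → ℂˣ)
    (hω : ∀ a b c d : N,
      ω b c d * ω a (b * c) d * ω a b c = ω (a * b) c d * ω a b (c * d))
    (z : N) (hz : z ∈ Subgroup.center N) :
    ∀ a b c : N,
      (ω z a b * ω a b z * (ω a z b)⁻¹) *
          (ω z (a * b) c * ω (a * b) c z * (ω (a * b) z c)⁻¹) =
        (ω z b c * ω b c z * (ω b z c)⁻¹) *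
          (ω z a (b * c) * ω a (b * c) z * (ω a z (b * c))⁻¹) := by
  intro a b c
  have hc := Subgroup.mem_center_iff.mp hz
  have e1 := hω z a b c
  have e2 := hω a z b c
  have e3 := hω a b z c
  have e4 := hω a b c z
  rw [hc a] at e2
  rw [hc b] at e3
  rw [hc c] at e4
  have E1 := congrArg Units.val e1
  have E2 := congrArg Units.val e2
  have E3 := congrArg Units.val e3
  have E4 := congrArg Units.val e4
  push_cast at E1 E2 E3 E4
  rw [← Units.val_inj]
  push_cast
  field_simp
  have hne : ((ω a b c : ℂ) * (ω a (z*b) c : ℂ)) ≠ 0 :=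
    mul_ne_zero (Units.ne_zero _) (Units.ne_zero _)
  refine mul_left_cancel₀ hne ?_
  linear_combination ((ω (a*b) c z : ℂ) * (ω a z (b*c) : ℂ) * (ω b z c : ℂ) * (ω a (z*b) c : ℂ) * (ω a b z : ℂ) * E1
    + (ω (a*b) c z : ℂ) * (ω a z (b*c) : ℂ) * (ω (z*a) b c : ℂ) * (ω z a (b*c) : ℂ) * E3
    - (ω z a (b*c) : ℂ) * (ω (a*b) z c : ℂ) * (ω b c z : ℂ) * (ω a (b*c) z : ℂ) * (ω a b c : ℂ) * E2
    - (ω z a (b*c) : ℂ) * (ω (a*b) z c : ℂ) * (ω (z*a) b c : ℂ) * (ω a z (b*c) : ℂ) * E4)
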